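/- For k = 2t+1 ≥ 7, define the sequence c given by the k-cycle C = (0, -1, 1, -2, 2, -3, 3, ..., 1-t, t-1, -t, 2t) in the integers. Then the set of absolute values of differences of consecutive entries of C (cyclically) equals [1, 2t] ∪ {3t}, and these k values are pairwise distinct. -/
import Mathlib


/-- The integer sequence of the cycle `C = (0, -1, 1, -2, 2, -3, 3, ..., 1-t, t-1, -t, 2t)`
on `k = 2t + 1` entries, indexed by `j ∈ [0, 2t]`. -/
def cseq (t : ℕ) (j : ℕ) : ℤ :=
  if j = 0 then 0
  else if j = 2 * t - 1 then -(t : ℤ)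
  else if j = 2 * t then 2 * t
  else if j % 2 = 1 then -(((j : ℤ) + 1) / 2)
  else (j : ℤ) / 2

lemma key (t : ℕ) (ht : 3 ≤ t) (j : ℕ) (hj : j ≤ 2 * t) :
    |cseq t ((j + 1) % (2 * t + 1)) - cseq t j|
      = if j = 2 * t - 1 then 3 * (t : ℤ)
        else if j = 2 * t then 2 * (t : ℤ) else (j : ℤ) + 1 := by
  rcases eq_or_lt_of_le hj with h2t | hlt
  · subst h2t
    rw [if_neg (by omega), if_pos rfl]
    have hm : (2 * t + 1) % (2 * t + 1) = 0 := Nat.mod_self _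
    rw [hm]
    simp only [cseq, if_pos rfl, if_neg (show 2 * t ≠ 0 by omega),
      if_neg (show 2 * t ≠ 2 * t - 1 by omega), if_pos rfl]
    rw [abs_eq (by positivity)]
    push_cast
    omega
  · have hm : (j + 1) % (2 * t + 1) = j + 1 := Nat.mod_eq_of_lt (by omega)
    rw [hm]
    rcases eq_or_lt_of_le (show j + 1 ≤ 2 * t from hlt) with heq | hlt2
    · -- j = 2t - 1
      have hj' : j = 2 * t - 1 := by omega
      subst hj'
      rw [if_pos rfl]
      have h1 : 2 * t - 1 + 1 = 2 * t := by omega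
      rw [h1]
      simp only [cseq, if_neg (show 2 * t ≠ 0 by omega),
        if_neg (show 2 * t ≠ 2 * t - 1 by omega), if_pos rfl,
        if_neg (show 2 * t - 1 ≠ 0 by omega), if_pos rfl, if_true]
      rw [abs_eq (by positivity)]
      omega
    · -- j + 1 < 2t, i.e. j ≤ 2t - 2
      rw [if_neg (by omega), if_neg (by omega)]
      rcases Nat.even_or_odd j with he | ho
      · -- j even, j+1 odd; j+1 could be 2t-1
        obtain ⟨m, hm2⟩ := he
        by_cases hcase : j + 1 = 2 * t - 1
        · -- j = 2t - 2
          simp only [cseq, if_neg (show j + 1 ≠ 0 by omega), if_pos hcase]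
          by_cases hj0 : j = 0
          · omega
          · rw [if_neg hj0, if_neg (by omega), if_neg (by omega),
              if_neg (show j % 2 ≠ 1 by omega)]
            rw [abs_eq (by positivity)]
            omega
        · simp only [cseq, if_neg (show j + 1 ≠ 0 by omega), if_neg hcase,
            if_neg (show j + 1 ≠ 2 * t by omega),
            if_pos (show (j + 1) % 2 = 1 by omega)]
          by_cases hj0 : j = 0
          · subst hj0
            norm_num
          · rw [if_neg hj0, if_neg (by omega), if_neg (by omega),
              if_neg (show j % 2 ≠ 1 by omega)]
            rw [abs_eq (by positivity)]
            push_cast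
            omega
      · -- j odd, j+1 even; j ≥ 1, j+1 ≠ 2t-1 (parity), j+1 ≠ 2t
        obtain ⟨m, hm2⟩ := ho
        simp only [cseq, if_neg (show j + 1 ≠ 0 by omega),
          if_neg (show j + 1 ≠ 2 * t - 1 by omega),
          if_neg (show j + 1 ≠ 2 * t by omega),
          if_neg (show (j + 1) % 2 ≠ 1 by omega),
          if_neg (show j ≠ 0 by omega), if_neg (show j ≠ 2 * t - 1 by omega),
          if_neg (show j ≠ 2 * t by omega), if_pos (show j % 2 = 1 by omega)]
        rw [abs_eq (by positivity)]
        push_cast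
        omega


/-- For `k = 2t + 1 ≥ 7`, the absolute values of the differences of cyclically consecutive
entries of `C = (0, -1, 1, -2, 2, ..., 1-t, t-1, -t, 2t)` are pairwise distinct and form
exactly the set `[1, 2t] ∪ {3t}`. -/
theorem stmt19 (t : ℕ) (ht : 3 ≤ t) :
    Function.Injective (fun j : Fin (2 * t + 1) =>
      |cseq t (((j : ℕ) + 1) % (2 * t + 1)) - cseq t (j : ℕ)|) ∧
    Set.range (fun j : Fin (2 * t + 1) =>
        |cseq t (((j : ℕ) + 1) % (2 * t + 1)) - cseq t (j : ℕ)|)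
      = Set.Icc (1 : ℤ) (2 * t) ∪ {(3 * t : ℤ)} := by
  constructor
  · rintro ⟨a, ha⟩ ⟨b, hb⟩ hab
    simp only at hab
    rw [key t ht a (by omega), key t ht b (by omega)] at hab
    apply Fin.ext
    simp only
    split_ifs at hab <;> omega
  · ext x
    simp only [Set.mem_range, Set.mem_union, Set.mem_Icc, Set.mem_singleton_iff]
    constructor
    · rintro ⟨⟨j, hj⟩, rfl⟩
      simp only
      rw [key t ht j (by omega)]
      split_ifs <;> omega
    · rintro (⟨h1, h2⟩ | rfl)
      · rcases eq_or_lt_of_le h2 with h3 | h3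
        · refine ⟨⟨2 * t, by omega⟩, ?_⟩
          simp only
          rw [key t ht (2 * t) le_rfl, if_neg (by omega), if_pos rfl]
          omega
        · refine ⟨⟨x.toNat - 1, by omega⟩, ?_⟩
          simp only
          rw [key t ht (x.toNat - 1) (by omega), if_neg (by omega),
            if_neg (by omega)]
          omega
      · refine ⟨⟨2 * t - 1, by omega⟩, ?_⟩
        simp only
        rw [key t ht (2 * t - 1) (by omega), if_pos rfl]
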